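/- Let f be a complex polynomial of degree n ≥ 4 with no simple roots (every root has multiplicity at least 2). Let f₂ be the product of (x - β) over distinct roots β of multiplicity exactly 2, and f₃ the product of (x - γ) over distinct roots γ of multiplicity at least 3. Then a polynomial p of degree at most n-2 satisfies f ∣ (f''p - f'p') if and only if f₂·f₃² divides p. -/

import Mathlib

open Polynomial

private lemma key_local (f : Polynomial ℂ) (hf : f ≠ 0) (β : ℂ)
    (h2 : 2 ≤ f.rootMultiplicity β) (p : Polynomial ℂ) :
    (X - C β) ^ (f.rootMultiplicity β) ∣
      (derivative (derivative f) * p - derivative f * derivative p)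
      ↔ (X - C β) ^ (if f.rootMultiplicity β = 2 then 1 else 2) ∣ p := by
  obtain ⟨k, hk⟩ : ∃ k, f.rootMultiplicity β = k + 2 :=
    ⟨f.rootMultiplicity β - 2, (Nat.sub_add_cancel h2).symm⟩
  set t : Polynomial ℂ := X - C β with ht
  set g := f /ₘ t ^ (f.rootMultiplicity β) with hg
  have hfg : t ^ (f.rootMultiplicity β) * g = f :=
    pow_mul_divByMonic_rootMultiplicity_eq f β
  have hgβ : g.eval β ≠ 0 := eval_divByMonic_pow_rootMultiplicity_ne_zero β hf
  have htβ : t.eval β = 0 := by simp [ht]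
  have htne : t ≠ 0 := X_sub_C_ne_zero β
  set B : Polynomial ℂ := C ((k : ℂ) + 2) * g + t * derivative g with hB
  set W : Polynomial ℂ := C ((k : ℂ) + 3) * derivative g + t * derivative (derivative g) with hW
  set A : Polynomial ℂ := C ((k : ℂ) + 1) * B + t * W with hA
  have hdt : derivative t = 1 := by simp [ht]
  have hf' : derivative f = t ^ (k + 1) * B := by
    rw [← hfg, hk, derivative_mul, derivative_pow, hdt, hB]
    push_cast
    ring
  have hdB : derivative B = W := by
    rw [hB, hW]
    simp only [derivative_add, derivative_mul, derivative_C, hdt, zero_mul, one_mul, zero_add]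
    have h3 : C ((k : ℂ) + 3) = C ((k : ℂ) + 2) + 1 := by
      rw [← C_1, ← C_add]; congr 1; ring
    rw [h3]
    ring
  have hf'' : derivative (derivative f) = t ^ k * A := by
    rw [hf', derivative_mul, derivative_pow, hdt, hdB, hA]
    push_cast
    ring
  have hq : derivative (derivative f) * p - derivative f * derivative p
      = t ^ k * (A * p - t * (B * derivative p)) := by
    rw [hf'', hf']; ring
  have key : t ^ (f.rootMultiplicity β) ∣
      (derivative (derivative f) * p - derivative f * derivative p)
      ↔ t ^ 2 ∣ (A * p - t * (B * derivative p)) := by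
    rw [hq, hk, pow_add]
    exact mul_dvd_mul_iff_left (pow_ne_zero k htne)
  rw [key]
  have hBβ : B.eval β = ((k : ℂ) + 2) * g.eval β := by simp [hB, htβ]
  have hAβ : A.eval β = ((k : ℂ) + 1) * (((k : ℂ) + 2) * g.eval β) := by
    simp [hA, htβ, hBβ]
  have hAβne : A.eval β ≠ 0 := by
    rw [hAβ]
    have hc1 : ((k : ℂ) + 1) ≠ 0 := by
      exact_mod_cast (Nat.cast_ne_zero (R := ℂ)).mpr (by omega : k + 1 ≠ 0)
    have hc2 : ((k : ℂ) + 2) ≠ 0 := by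
      exact_mod_cast (Nat.cast_ne_zero (R := ℂ)).mpr (by omega : k + 2 ≠ 0)
    exact mul_ne_zero hc1 (mul_ne_zero hc2 hgβ)
  -- first: in all cases, divisibility implies t ∣ p
  have hstep1 : t ^ 2 ∣ (A * p - t * (B * derivative p)) → t ∣ p := by
    intro h
    have h1 : t ∣ (A * p - t * (B * derivative p)) := dvd_trans (dvd_pow_self t two_ne_zero) h
    rw [ht, dvd_iff_isRoot] at h1 ⊢
    have := h1
    simp only [IsRoot, eval_sub, eval_mul, eval_X, eval_C, sub_self, htβ, zero_mul, sub_zero] at this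
    rcases mul_eq_zero.mp this with h' | h'
    · exact absurd h' hAβne
    · exact h'
  by_cases hm2 : f.rootMultiplicity β = 2
  · -- k = 0
    have hk0 : k = 0 := by omega
    subst hk0
    rw [if_pos hm2, pow_one]
    constructor
    · exact hstep1
    · rintro ⟨u, hu⟩
      refine ⟨W * u - B * derivative u, ?_⟩
      have hA1 : A = B + t * W := by rw [hA]; norm_num
      rw [hu, derivative_mul, hdt, hA1]
      ring
  · rw [if_neg hm2]
    have hkpos : 1 ≤ k := by omega
    constructor
    · intro h
      obtain ⟨u, hu⟩ := hstep1 h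
      have h2' : t ^ 2 ∣ t * (((A - B) * u) - t * (B * derivative u)) := by
        convert h using 1
        rw [hu, derivative_mul, hdt]
        ring
      rw [pow_two] at h2'
      have h3 : t ∣ (((A - B) * u) - t * (B * derivative u)) :=
        (mul_dvd_mul_iff_left htne).mp h2'
      rw [ht, dvd_iff_isRoot] at h3
      have h4 : (A.eval β - B.eval β) * u.eval β = 0 := by
        simpa [IsRoot, htβ] using h3
      have hABne : A.eval β - B.eval β ≠ 0 := by
        rw [hAβ, hBβ]
        have : ((k : ℂ) + 1) * (((k : ℂ) + 2) * g.eval β) - ((k : ℂ) + 2) * g.eval β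
            = (k : ℂ) * (((k : ℂ) + 2) * g.eval β) := by ring
        rw [this]
        have hc2 : ((k : ℂ) + 2) ≠ 0 := by
          exact_mod_cast (Nat.cast_ne_zero (R := ℂ)).mpr (by omega : k + 2 ≠ 0)
        refine mul_ne_zero ?_ (mul_ne_zero hc2 hgβ)
        exact (Nat.cast_ne_zero (R := ℂ)).mpr (by omega)
      have huβ : u.eval β = 0 := by
        rcases mul_eq_zero.mp h4 with h' | h'
        · exact absurd h' hABne
        · exact h'
      obtain ⟨v, hv⟩ := (dvd_iff_isRoot.mpr huβ : (X - C β) ∣ u)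
      exact ⟨v, by rw [hu, hv]; ring⟩
    · rintro ⟨u, hu⟩
      refine ⟨A * u - B * (C 2 * u + t * derivative u), ?_⟩
      rw [hu, derivative_mul, derivative_sq, hdt]
      ring

theorem stmt3 (f : Polynomial ℂ) (hn : 4 ≤ f.natDegree)
    (hmult : ∀ β : ℂ, f.IsRoot β → 2 ≤ f.rootMultiplicity β)
    (f₂ f₃ : Polynomial ℂ)
    (hf₂ : f₂ = ∏ β ∈ f.roots.toFinset.filter (fun β => f.rootMultiplicity β = 2), (X - C β))
    (hf₃ : f₃ = ∏ β ∈ f.roots.toFinset.filter (fun β => 3 ≤ f.rootMultiplicity β), (X - C β))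
    (p : Polynomial ℂ) (hp : p.degree ≤ (f.natDegree - 2 : ℕ)) :
    f ∣ (derivative (derivative f) * p - derivative f * derivative p) ↔ f₂ * f₃ ^ 2 ∣ p := by
  classical
  have hf : f ≠ 0 := by
    intro h; rw [h] at hn; simp at hn
  set R := f.roots.toFinset with hR
  have hmge : ∀ β ∈ R, 2 ≤ f.rootMultiplicity β := fun β hb =>
    hmult β (isRoot_of_mem_roots (Multiset.mem_toFinset.mp hb))
  set e : ℂ → ℕ := fun β => if f.rootMultiplicity β = 2 then 1 else 2 with he
  -- coprimality helper
  have hcop : ∀ (n : ℂ → ℕ) (q : Polynomial ℂ),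
      (∏ β ∈ R, (X - C β) ^ (n β)) ∣ q ↔ ∀ β ∈ R, (X - C β) ^ (n β) ∣ q := by
    intro n q
    constructor
    · intro h β hb
      exact (Finset.dvd_prod_of_mem (fun β => (X - C β) ^ (n β)) hb).trans h
    · intro h
      refine Finset.prod_dvd_of_coprime (fun a _ b _ hab => ?_) h
      exact (pairwise_coprime_X_sub_C Function.injective_id hab).pow
  -- f as product
  have hfeq : f = C f.leadingCoeff * ∏ β ∈ R, (X - C β) ^ (f.rootMultiplicity β) := by
    conv_lhs => rw [(IsAlgClosed.splits f).eq_prod_roots,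
      prod_multiset_root_eq_finset_root]
  set q := derivative (derivative f) * p - derivative f * derivative p with hqd
  have hfd : f ∣ q ↔ ∀ β ∈ R, (X - C β) ^ (f.rootMultiplicity β) ∣ q := by
    nth_rewrite 1 [hfeq]
    rw [C_mul_dvd (leadingCoeff_ne_zero.mpr hf)]
    exact hcop _ _
  -- f₂ f₃ ^ 2 as product
  have h23 : R.filter (fun β => ¬ f.rootMultiplicity β = 2)
      = R.filter (fun β => 3 ≤ f.rootMultiplicity β) := by
    refine Finset.filter_congr fun β hb => ?_
    have := hmge β hb
    constructor <;> intro <;> omega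
  have hP : f₂ * f₃ ^ 2 = ∏ β ∈ R, (X - C β) ^ (e β) := by
    rw [← Finset.prod_filter_mul_prod_filter_not R (fun β => f.rootMultiplicity β = 2),
      h23, hf₂, hf₃, ← Finset.prod_pow]
    congr 1
    · refine Finset.prod_congr rfl fun β hb => ?_
      have : f.rootMultiplicity β = 2 := (Finset.mem_filter.mp hb).2
      simp [he, this]
    · refine Finset.prod_congr rfl fun β hb => ?_
      have h3 : 3 ≤ f.rootMultiplicity β := (Finset.mem_filter.mp hb).2
      have : ¬ f.rootMultiplicity β = 2 := by omega
      simp [he, this]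
  rw [hP, hcop, hfd, hqd]
  exact forall₂_congr fun β hb => key_local f hf β (hmge β hb) p
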